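/- Let q ≥ 2. The rewriting system P on base-q power sums is terminating: there is no infinite sequence S_1 → S_2 → ... of applications of rules of P. -/

import Mathlib

/-- One rewriting step of the system `𝒫` on base-`q` power sums
(rules (1)–(4) of the paper), given as a relation on coefficient sequences. -/
def PSStep (q : ℤ) (α β : ℕ → ℤ) : Prop :=
  (∃ i, 0 < α i ∧ α (i + 1) < 0 ∧
    β = fun k => if k = i then α i - q
      else if k = i + 1 then α (i + 1) + 1 else α k) ∨
  (∃ i, α i < 0 ∧ 0 < α (i + 1) ∧
    β = fun k => if k = i then α i + q
      else if k = i + 1 then α (i + 1) - 1 else α k) ∨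
  (∃ i j, i < j ∧ 0 < α i ∧ (∀ k, i < k → k ≤ j → α k = q - 1) ∧
    α (j + 1) < q - 1 ∧
    β = fun k => if k = i then α i - q
      else if i < k ∧ k ≤ j then 0
      else if k = j + 1 then α (j + 1) + 1 else α k) ∨
  (∃ i j, i < j ∧ α i < 0 ∧ (∀ k, i < k → k ≤ j → α k = -q + 1) ∧
    -q + 1 < α (j + 1) ∧
    β = fun k => if k = i then α i + q
      else if i < k ∧ k ≤ j then 0
      else if k = j + 1 then α (j + 1) - 1 else α k)

namespace Stmt8Aux

/-- Unified form of the four rules. -/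
def UStep (q : ℤ) (α β : ℕ → ℤ) (i j : ℕ) (s : ℤ) : Prop :=
  i ≤ j ∧ (s = 1 ∨ s = -1) ∧ 0 < s * α i ∧
    (∀ k, i < k → k ≤ j → α k = s * (q - 1)) ∧
    (j = i → s * α (i + 1) < 0) ∧
    β = fun k => if k = i then α i - s * q
      else if i < k ∧ k ≤ j then 0
      else if k = j + 1 then α (j + 1) + s else α k

lemma psstep_ustep {q : ℤ} {α β : ℕ → ℤ} (h : PSStep q α β) :
    ∃ i j s, UStep q α β i j s := by
  rcases h with ⟨i, h1, h2, hβ⟩ | ⟨i, h1, h2, hβ⟩ |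
    ⟨i, j, hij, h1, hmid, h2, hβ⟩ | ⟨i, j, hij, h1, hmid, h2, hβ⟩
  · refine ⟨i, i, 1, le_rfl, Or.inl rfl, by simpa using h1, ?_, ?_, ?_⟩
    · intro k hk1 hk2; omega
    · intro _; simpa using h2
    · rw [hβ]; funext k
      by_cases hki : k = i
      · simp [hki]
      · have hm : ¬(i < k ∧ k ≤ i) := by omega
        simp [hki, hm]
  · refine ⟨i, i, -1, le_rfl, Or.inr rfl, by linarith, ?_, ?_, ?_⟩
    · intro k hk1 hk2; omega
    · intro _; linarith
    · rw [hβ]; funext k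
      by_cases hki : k = i
      · simp [hki]
      · have hm : ¬(i < k ∧ k ≤ i) := by omega
        simp [hki, hm]
        by_cases hk1 : k = i + 1
        · simp [hk1]; ring
        · simp [hk1]
  · refine ⟨i, j, 1, le_of_lt hij, Or.inl rfl, by simpa using h1, ?_, ?_, ?_⟩
    · intro k hk1 hk2; rw [hmid k hk1 hk2]; ring
    · intro h; rw [h] at hij; exact absurd hij (lt_irrefl i)
    · rw [hβ]; funext k; split_ifs <;> ring
  · refine ⟨i, j, -1, le_of_lt hij, Or.inr rfl, by linarith, ?_, ?_, ?_⟩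
    · intro k hk1 hk2; rw [hmid k hk1 hk2]; ring
    · intro h; rw [h] at hij; exact absurd hij (lt_irrefl i)
    · rw [hβ]; funext k; split_ifs <;> ring

lemma ustep_facts {q : ℤ} (hq : 2 ≤ q) {α β : ℕ → ℤ} {i j : ℕ} {s : ℤ}
    (h : UStep q α β i j s) (hd : ∀ k, |α k| ≤ q - 1) :
    (s = 1 ∨ s = -1) ∧ i ≤ j ∧ 0 < s * α i ∧ α i ≠ 0 ∧
      s * β i < 0 ∧ β i ≠ 0 ∧
      (∀ k, i < k → k ≤ j → α k ≠ 0 ∧ β k = 0) ∧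
      β (j + 1) = α (j + 1) + s ∧
      (∀ k, k ≠ i → k ≤ i ∨ j + 1 < k → β k = α k) ∧
      (j = i → s * α (i + 1) < 0) := by
  obtain ⟨hij, hs, hαi, hmid, hji, hβ⟩ := h
  subst hβ
  have hss : s * s = 1 := by rcases hs with rfl | rfl <;> norm_num
  have hβi : (if i = i then α i - s * q else if i < i ∧ i ≤ j then 0
      else if i = j + 1 then α (j + 1) + s else α i) = α i - s * q := by simp
  have hsαle : s * α i ≤ q - 1 := by
    have h1 : s * α i ≤ |s * α i| := le_abs_self _
    have h2 : |s * α i| = |α i| := by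
      rw [abs_mul]; rcases hs with rfl | rfl <;> simp
    have := hd i; linarith
  have hsβi : s * (α i - s * q) < 0 := by
    have : s * (α i - s * q) = s * α i - s * s * q := by ring
    rw [this, hss]; linarith
  refine ⟨hs, hij, hαi, ?_, ?_, ?_, ?_, ?_, ?_, hji⟩
  · intro h0; rw [h0, mul_zero] at hαi; exact lt_irrefl 0 hαi
  · simpa [hβi] using hsβi
  · intro h0
    have h0' : α i - s * q = 0 := by simpa using h0
    rw [h0', mul_zero] at hsβi
    exact lt_irrefl 0 hsβi
  · intro k hk1 hk2
    constructor
    · rw [hmid k hk1 hk2]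
      rcases hs with rfl | rfl <;> simp <;> omega
    · have hki : ¬(k = i) := by omega
      simp [hki, hk1, hk2]
  · have h1 : ¬(j + 1 = i) := by omega
    have h2 : ¬(i < j + 1 ∧ j + 1 ≤ j) := by omega
    simp [h1, h2]
  · intro k hk1 hk2
    have h1 : ¬(i < k ∧ k ≤ j) := by omega
    have h2 : ¬(k = j + 1) := by omega
    simp [hk1, h1, h2]

lemma geo (q : ℤ) : ∀ a b : ℕ, a ≤ b →
    (q - 1) * ∑ k ∈ Finset.Ico a b, q ^ k = q ^ b - q ^ a := by
  intro a b h
  induction b, h using Nat.le_induction with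
  | base => simp
  | succ b hb IH =>
    rw [Finset.sum_Ico_succ_top hb, mul_add, IH, pow_succ]; ring

lemma val_step {q : ℤ} {α β : ℕ → ℤ} {i j : ℕ} {s : ℤ} (h : UStep q α β i j s) :
    ∀ M, j + 1 < M →
      ∑ k ∈ Finset.range M, β k * q ^ k = ∑ k ∈ Finset.range M, α k * q ^ k := by
  obtain ⟨hij, hs, hαi, hmid, hji, hβ⟩ := h
  intro M hM
  have hdiff : ∑ k ∈ Finset.range M, (β k * q ^ k - α k * q ^ k) = 0 := by
    have hres : ∑ k ∈ Finset.range M, (β k * q ^ k - α k * q ^ k)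
        = ∑ k ∈ Finset.Icc i (j + 1), (β k * q ^ k - α k * q ^ k) := by
      symm
      apply Finset.sum_subset
      · intro k hk; rw [Finset.mem_Icc] at hk; rw [Finset.mem_range]; omega
      · intro k hk hnk
        rw [Finset.mem_range] at hk
        rw [Finset.mem_Icc] at hnk
        have hk' : k < i ∨ j + 1 < k := by omega
        have hβk : β k = α k := by
          rw [hβ]; dsimp only
          rw [if_neg (by omega), if_neg (by omega), if_neg (by omega)]
        rw [hβk]; ring
    rw [hres]
    have h1 : Finset.Icc i (j + 1) = insert i (Finset.Icc (i + 1) (j + 1)) := by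
      ext k; simp only [Finset.mem_Icc, Finset.mem_insert]; omega
    have h2 : Finset.Icc (i + 1) (j + 1) = insert (j + 1) (Finset.Icc (i + 1) j) := by
      ext k; simp only [Finset.mem_Icc, Finset.mem_insert]; omega
    rw [h1, Finset.sum_insert (by simp only [Finset.mem_Icc]; omega), h2,
      Finset.sum_insert (by simp only [Finset.mem_Icc]; omega)]
    have ti : β i * q ^ i - α i * q ^ i = -(s * q ^ (i + 1)) := by
      rw [hβ]; dsimp only; rw [if_pos rfl, pow_succ]; ring
    have tt : β (j + 1) * q ^ (j + 1) - α (j + 1) * q ^ (j + 1) = s * q ^ (j + 1) := by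
      rw [hβ]; dsimp only
      rw [if_neg (by omega), if_neg (by omega), if_pos rfl]; ring
    have tm : ∑ k ∈ Finset.Icc (i + 1) j, (β k * q ^ k - α k * q ^ k)
        = -(s * (q ^ (j + 1) - q ^ (i + 1))) := by
      have e : ∀ k ∈ Finset.Icc (i + 1) j,
          β k * q ^ k - α k * q ^ k = -(s * (q - 1)) * q ^ k := by
        intro k hk
        rw [Finset.mem_Icc] at hk
        have hβk : β k = 0 := by
          rw [hβ]; dsimp only
          rw [if_neg (by omega), if_pos (by omega)]
        rw [hβk, hmid k (by omega) (by omega)]; ring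
      rw [Finset.sum_congr rfl e, ← Finset.mul_sum]
      have hgeo : (q - 1) * ∑ k ∈ Finset.Icc (i + 1) j, q ^ k
          = q ^ (j + 1) - q ^ (i + 1) := by
        rw [← Finset.Ico_add_one_right_eq_Icc]
        exact geo q (i + 1) (j + 1) (by omega)
      linear_combination (-s) * hgeo
    rw [ti, tt, tm]; ring
  rw [Finset.sum_sub_distrib] at hdiff
  linarith


lemma supp_bound (q : ℤ) (hq : 2 ≤ q) (α : ℕ → ℤ) (b : ℕ)
    (hd : ∀ k, |α k| ≤ q - 1) (hb : ∀ k, b ≤ k → α k = 0) :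
    ∀ p, p < b → α p ≠ 0 →
      (q : ℤ) ^ p ≤ |∑ k ∈ Finset.range b, α k * q ^ k| *
        q ^ (((Finset.range b).filter fun k => α k ≠ 0 ∧ k < p).card) := by
  have hq0 : (0:ℤ) < q := by linarith
  set v := ∑ k ∈ Finset.range b, α k * q ^ k with hv
  have cstep : ∀ p, p < b → α p ≠ 0 →
      (q:ℤ) ^ p ≤ |v| + (q - 1) *
        ∑ k ∈ (Finset.range b).filter (fun k => α k ≠ 0 ∧ k < p), q ^ k := by
    intro p hpb hpa
    set Lo := ∑ k ∈ (Finset.range b).filter (fun k => k < p), α k * q ^ k with hLo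
    set Hi := ∑ k ∈ (Finset.range b).filter (fun k => ¬ k < p), α k * q ^ k with hHi
    set T := ∑ k ∈ (Finset.range b).filter (fun k => p < k), α k * q ^ k with hT
    have hsplit : Lo + Hi = v := Finset.sum_filter_add_sum_filter_not _ _ _
    have hins : (Finset.range b).filter (fun k => ¬ k < p)
        = insert p ((Finset.range b).filter (fun k => p < k)) := by
      ext k
      simp only [Finset.mem_filter, Finset.mem_range, Finset.mem_insert]
      omega
    have hHiT : Hi = α p * q ^ p + T := by
      rw [hHi, hins, Finset.sum_insert (by simp only [Finset.mem_filter]; omega)]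
    have hdvdT : (q:ℤ) ^ (p + 1) ∣ T := by
      apply Finset.dvd_sum
      intro k hk
      simp only [Finset.mem_filter, Finset.mem_range] at hk
      exact Dvd.dvd.mul_left (pow_dvd_pow q (by omega)) (α k)
    have hHine : Hi ≠ 0 := by
      intro h0
      have h1 : (q:ℤ) ^ (p + 1) ∣ α p * q ^ p := by
        have : α p * q ^ p = -T := by rw [hHiT] at h0; linarith
        rw [this]
        exact Dvd.dvd.neg_right hdvdT
      have h2 : q ∣ α p := by
        have h3 : (q:ℤ) ^ p * q ∣ q ^ p * α p := by
          rw [← pow_succ]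
          calc (q:ℤ) ^ (p + 1) ∣ α p * q ^ p := h1
            _ = q ^ p * α p := by ring
        exact (mul_dvd_mul_iff_left (pow_ne_zero p (ne_of_gt hq0))).mp h3
      have h4 : q ≤ |α p| := Int.le_of_dvd (abs_pos.mpr hpa) ((dvd_abs q (α p)).mpr h2)
      have h5 := hd p
      linarith
    have hdvdHi : (q:ℤ) ^ p ∣ Hi := by
      rw [hHiT]
      exact dvd_add (dvd_mul_left _ _) (dvd_trans (pow_dvd_pow q (Nat.le_succ p)) hdvdT)
    have hHige : (q:ℤ) ^ p ≤ |Hi| :=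
      Int.le_of_dvd (abs_pos.mpr hHine) ((dvd_abs _ _).mpr hdvdHi)
    have hLoabs : |Lo| ≤ (q - 1) *
        ∑ k ∈ (Finset.range b).filter (fun k => α k ≠ 0 ∧ k < p), q ^ k := by
      have s1 : |Lo| ≤ ∑ k ∈ (Finset.range b).filter (fun k => k < p), |α k| * q ^ k := by
        refine le_trans (Finset.abs_sum_le_sum_abs _ _) (le_of_eq ?_)
        apply Finset.sum_congr rfl
        intro k _
        rw [abs_mul, abs_pow, abs_of_nonneg (le_of_lt hq0)]
      have s2 : ∑ k ∈ (Finset.range b).filter (fun k => k < p), |α k| * q ^ k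
          = ∑ k ∈ (Finset.range b).filter (fun k => α k ≠ 0 ∧ k < p), |α k| * q ^ k := by
        symm
        apply Finset.sum_subset
        · intro k hk
          simp only [Finset.mem_filter, Finset.mem_range] at hk ⊢
          exact ⟨hk.1, hk.2.2⟩
        · intro k hk hnk
          simp only [Finset.mem_filter, Finset.mem_range] at hk hnk
          have : α k = 0 := by
            by_contra hc
            exact hnk ⟨hk.1, hc, hk.2⟩
          rw [this]; simp
      have s3 : ∑ k ∈ (Finset.range b).filter (fun k => α k ≠ 0 ∧ k < p), |α k| * q ^ k
          ≤ ∑ k ∈ (Finset.range b).filter (fun k => α k ≠ 0 ∧ k < p), (q - 1) * q ^ k := by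
        apply Finset.sum_le_sum
        intro k _
        exact mul_le_mul_of_nonneg_right (hd k) (pow_nonneg (le_of_lt hq0) k)
      rw [← Finset.mul_sum] at s3
      calc |Lo| ≤ _ := s1
        _ = _ := s2
        _ ≤ _ := s3
    have hHile : |Hi| ≤ |v| + |Lo| := by
      have : Hi = v + -Lo := by linarith
      rw [this]
      calc |v + -Lo| ≤ |v| + |-Lo| := abs_add_le _ _
        _ = |v| + |Lo| := by rw [abs_neg]
    linarith
  have main : ∀ p, (q - 1) *
      ∑ k ∈ (Finset.range b).filter (fun k => α k ≠ 0 ∧ k < p), (q:ℤ) ^ k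
      ≤ |v| * (q ^ (((Finset.range b).filter fun k => α k ≠ 0 ∧ k < p).card) - 1) := by
    intro p
    induction p using Nat.strong_induction_on with
    | _ p IH =>
      rcases Finset.eq_empty_or_nonempty
          ((Finset.range b).filter fun k => α k ≠ 0 ∧ k < p) with he | hne
      · rw [he]; simp
      · set p' := ((Finset.range b).filter fun k => α k ≠ 0 ∧ k < p).max' hne with hp'
        have hp'mem := Finset.max'_mem _ hne
        rw [← hp'] at hp'mem
        have hp'f : p' < b ∧ α p' ≠ 0 ∧ p' < p := by
          simpa only [Finset.mem_filter, Finset.mem_range] using hp'mem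
        have hset : (Finset.range b).filter (fun k => α k ≠ 0 ∧ k < p)
            = insert p' ((Finset.range b).filter (fun k => α k ≠ 0 ∧ k < p')) := by
          ext k
          simp only [Finset.mem_filter, Finset.mem_range, Finset.mem_insert]
          constructor
          · rintro ⟨hkb, hka, hkp⟩
            by_cases hk : k = p'
            · exact Or.inl hk
            · right
              refine ⟨hkb, hka, ?_⟩
              have : k ≤ p' := Finset.le_max' _ k (by
                simp only [Finset.mem_filter, Finset.mem_range]
                exact ⟨hkb, hka, hkp⟩)
              omega
          · rintro (rfl | ⟨hkb, hka, hkp⟩)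
            · exact ⟨hp'f.1, hp'f.2.1, hp'f.2.2⟩
            · exact ⟨hkb, hka, by omega⟩
        have hnm : p' ∉ (Finset.range b).filter (fun k => α k ≠ 0 ∧ k < p') := by
          simp only [Finset.mem_filter, Finset.mem_range]
          omega
        have IH' := IH p' hp'f.2.2
        have hcs := cstep p' hp'f.1 hp'f.2.1
        set c' := ((Finset.range b).filter fun k => α k ≠ 0 ∧ k < p').card with hc'
        have hb' : (q:ℤ) ^ p' ≤ |v| * q ^ c' := by
          have he1 : |v| + |v| * (q ^ c' - 1) = |v| * q ^ c' := by ring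
          linarith
        rw [hset, Finset.sum_insert hnm, Finset.card_insert_of_notMem hnm]
        have e1 : (q - 1) * (q:ℤ) ^ p' ≤ (q - 1) * (|v| * q ^ c') :=
          mul_le_mul_of_nonneg_left hb' (by linarith)
        have e2 : (q - 1) * (|v| * (q:ℤ) ^ c') + |v| * (q ^ c' - 1)
            = |v| * (q ^ (c' + 1) - 1) := by rw [pow_succ]; ring
        calc (q - 1) * ((q:ℤ) ^ p' + ∑ k ∈ (Finset.range b).filter
              (fun k => α k ≠ 0 ∧ k < p'), q ^ k)
            = (q - 1) * q ^ p' + (q - 1) * ∑ k ∈ (Finset.range b).filter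
              (fun k => α k ≠ 0 ∧ k < p'), q ^ k := by ring
          _ ≤ |v| * (q ^ (c' + 1) - 1) := by linarith
  intro p hpb hpa
  have h1 := cstep p hpb hpa
  have h2 := main p
  have h3 : |v| + |v| * ((q:ℤ) ^ (((Finset.range b).filter
      fun k => α k ≠ 0 ∧ k < p).card) - 1)
      = |v| * q ^ (((Finset.range b).filter fun k => α k ≠ 0 ∧ k < p).card) := by ring
  linarith


open scoped Classical in
noncomputable def DSet (γ : ℕ → ℤ) (S : Finset ℕ) : Finset (ℕ × ℕ) :=
  (S ×ˢ S).filter fun p => p.1 < p.2 ∧ (∀ t ∈ S, ¬(p.1 < t ∧ t < p.2)) ∧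
    γ p.1 * γ p.2 < 0

noncomputable def phiMeas (γ : ℕ → ℤ) (S : Finset ℕ) : ℕ :=
  ∑ p ∈ DSet γ S, (p.1 + 1)

lemma mem_DSet {γ : ℕ → ℤ} {S : Finset ℕ} {p : ℕ × ℕ} :
    p ∈ DSet γ S ↔ p.1 ∈ S ∧ p.2 ∈ S ∧ p.1 < p.2 ∧
      (∀ t ∈ S, ¬(p.1 < t ∧ t < p.2)) ∧ γ p.1 * γ p.2 < 0 := by
  unfold DSet
  classical
  rw [Finset.mem_filter, Finset.mem_product]
  tauto

lemma phi_le (γ : ℕ → ℤ) (S : Finset ℕ) (C : ℕ) (hS : ∀ k ∈ S, k < C) :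
    phiMeas γ S ≤ C * C * C := by
  have h1 : ∀ p ∈ DSet γ S, p.1 + 1 ≤ C := by
    intro p hp
    have := (mem_DSet.mp hp).1
    have := hS p.1 this
    omega
  have h2 : (DSet γ S).card ≤ C * C := by
    have h3 : (DSet γ S).card ≤ (S ×ˢ S).card := by
      apply Finset.card_le_card
      unfold DSet
      classical
      exact Finset.filter_subset _ _
    rw [Finset.card_product] at h3
    have h4 : S.card ≤ C := by
      have := Finset.card_le_card (fun k hk => Finset.mem_range.mpr (hS k hk))
      simpa using this
    exact h3.trans (Nat.mul_le_mul h4 h4)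
  calc phiMeas γ S ≤ (DSet γ S).card • C := Finset.sum_le_card_nsmul _ _ _ h1
    _ = (DSet γ S).card * C := by rw [smul_eq_mul]
    _ ≤ C * C * C := Nat.mul_le_mul_right C h2

lemma phi_dec {α β : ℕ → ℤ} {S : Finset ℕ} {i : ℕ} {s : ℤ}
    (hs : s = 1 ∨ s = -1)
    (hSα : ∀ k, k ∈ S ↔ α k ≠ 0)
    (hαi : 0 < s * α i) (hαi1 : s * α (i + 1) < 0)
    (hβi : s * β i < 0) (hβi1 : s * β (i + 1) < 0)
    (hoth : ∀ k, k ≠ i → k ≠ i + 1 → β k = α k) :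
    phiMeas β S + 1 ≤ phiMeas α S := by
  have hiS : i ∈ S := (hSα i).mpr (by
    intro h0; rw [h0, mul_zero] at hαi; exact lt_irrefl 0 hαi)
  have hi1S : i + 1 ∈ S := (hSα (i + 1)).mpr (by
    intro h0; rw [h0, mul_zero] at hαi1; exact lt_irrefl 0 hαi1)
  have hsign : ∀ k, k ≠ i → ((0 < β k ↔ 0 < α k) ∧ (β k < 0 ↔ α k < 0)) := by
    intro k hk
    by_cases hk1 : k = i + 1
    · subst hk1
      rcases hs with rfl | rfl
      · simp only [one_mul] at hαi1 hβi1
        exact ⟨iff_of_false (by linarith) (by linarith),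
          iff_of_true hβi1 hαi1⟩
      · have h1 : 0 < α (i + 1) := by linarith
        have h2 : 0 < β (i + 1) := by linarith
        exact ⟨iff_of_true h2 h1, iff_of_false (by linarith) (by linarith)⟩
    · rw [hoth k hk hk1]
      exact ⟨Iff.rfl, Iff.rfl⟩
  have hprod : ∀ k l, k ≠ i → l ≠ i → (β k * β l < 0 ↔ α k * α l < 0) := by
    intro k l hk hl
    rw [mul_neg_iff, mul_neg_iff, (hsign k hk).1, (hsign k hk).2,
      (hsign l hl).1, (hsign l hl).2]
  have hprodβpos : 0 < β i * β (i + 1) := by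
    rcases hs with rfl | rfl
    · simp only [one_mul] at hβi hβi1
      exact mul_pos_of_neg_of_neg hβi hβi1
    · have h1 : 0 < β i := by linarith
      have h2 : 0 < β (i + 1) := by linarith
      exact mul_pos h1 h2
  have hp0 : ((i, i + 1) : ℕ × ℕ) ∈ DSet α S := by
    rw [mem_DSet]
    refine ⟨hiS, hi1S, by omega, ?_, ?_⟩
    · intro t _ ht; omega
    · rcases hs with rfl | rfl
      · simp only [one_mul] at hαi hαi1
        exact mul_neg_of_pos_of_neg hαi hαi1
      · have h1 : α i < 0 := by linarith
        have h2 : 0 < α (i + 1) := by linarith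
        exact mul_neg_of_neg_of_pos h1 h2
  have h1 : ∀ p ∈ DSet β S, p.1 ≠ i := by
    intro p hp hcon
    rw [mem_DSet] at hp
    obtain ⟨hp1, hp2, hlt, hbet, hneg⟩ := hp
    have hp2i : p.2 = i + 1 := by
      by_contra hne
      exact hbet (i + 1) hi1S (by omega)
    rw [hcon, hp2i] at hneg
    linarith
  classical
  set E := (DSet β S).filter (fun p => p.2 = i) with hE
  have hEsub : E ⊆ DSet β S := Finset.filter_subset _ _
  have hcardE : E.card ≤ 1 := by
    rw [Finset.card_le_one]
    intro p hp p' hp'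
    rw [hE, Finset.mem_filter] at hp hp'
    obtain ⟨hpD, hp2⟩ := hp
    obtain ⟨hp'D, hp'2⟩ := hp'
    rw [mem_DSet] at hpD hp'D
    have hlt1 : p.1 < p.2 := hpD.2.2.1
    have hlt2 : p'.1 < p'.2 := hp'D.2.2.1
    have heq1 : p.1 = p'.1 := by
      rcases Nat.lt_trichotomy p.1 p'.1 with h | h | h
      · exact absurd ⟨h, by omega⟩ (hpD.2.2.2.1 p'.1 hp'D.1)
      · exact h
      · exact absurd ⟨h, by omega⟩ (hp'D.2.2.2.1 p.1 hpD.1)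
    exact Prod.ext heq1 (by rw [hp2, hp'2])
  have hEw : ∀ p ∈ E, p.1 + 1 ≤ i := by
    intro p hp
    rw [hE, Finset.mem_filter] at hp
    have := (mem_DSet.mp hp.1).2.2.1
    omega
  have hsub : DSet β S \ E ⊆ (DSet α S).erase (i, i + 1) := by
    intro p hp
    rw [Finset.mem_sdiff] at hp
    obtain ⟨hpD, hpE⟩ := hp
    have hp2ne : p.2 ≠ i := by
      intro h
      exact hpE (by rw [hE, Finset.mem_filter]; exact ⟨hpD, h⟩)
    have hp1ne : p.1 ≠ i := h1 p hpD
    rw [Finset.mem_erase]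
    constructor
    · intro hcon
      rw [hcon] at hp1ne
      exact hp1ne rfl
    · rw [mem_DSet] at hpD ⊢
      exact ⟨hpD.1, hpD.2.1, hpD.2.2.1, hpD.2.2.2.1,
        (hprod p.1 p.2 hp1ne hp2ne).mp hpD.2.2.2.2⟩
  have key1 : ∑ p ∈ DSet β S \ E, (p.1 + 1) + ∑ p ∈ E, (p.1 + 1)
      = phiMeas β S := Finset.sum_sdiff hEsub
  have key2 : ∑ p ∈ DSet β S \ E, (p.1 + 1)
      ≤ ∑ p ∈ (DSet α S).erase (i, i + 1), (p.1 + 1) :=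
    Finset.sum_le_sum_of_subset hsub
  have key3 : ∑ p ∈ E, (p.1 + 1) ≤ i := by
    calc ∑ p ∈ E, (p.1 + 1) ≤ E.card • i := Finset.sum_le_card_nsmul _ _ _ hEw
      _ = E.card * i := by rw [smul_eq_mul]
      _ ≤ 1 * i := Nat.mul_le_mul_right i hcardE
      _ = i := one_mul i
  have key4 : ∑ p ∈ (DSet α S).erase (i, i + 1), (p.1 + 1) + (i + 1)
      = phiMeas α S := Finset.sum_erase_add _ _ hp0
  omega

end Stmt8Aux

/-- the rewriting system `𝒫` is terminating: there is no infinite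
sequence of power sums related by steps of `𝒫`. -/
theorem stmt_8 (q : ℤ) (hq : 2 ≤ q) :
    ¬ ∃ f : ℕ → (ℕ → ℤ),
      ∀ n, (∀ i, |f n i| ≤ q - 1) ∧ (∃ m, ∀ i, m ≤ i → f n i = 0) ∧
        PSStep q (f n) (f (n + 1)) := by
  rintro ⟨f, hf⟩
  classical
  have hq0 : (0:ℤ) < q := by linarith
  have hdig : ∀ n k, |f n k| ≤ q - 1 := fun n => (hf n).1
  choose B hB using fun n => (hf n).2.1
  have hstep : ∀ n, PSStep q (f n) (f (n + 1)) := fun n => (hf n).2.2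
  choose ii jj ss hU using fun n => Stmt8Aux.psstep_ustep (hstep n)
  set Spt : ℕ → Finset ℕ :=
    fun n => (Finset.range (B n)).filter (fun k => f n k ≠ 0) with hSpt
  have memSpt : ∀ n k, k ∈ Spt n ↔ f n k ≠ 0 := by
    intro n k
    simp only [hSpt, Finset.mem_filter, Finset.mem_range]
    constructor
    · rintro ⟨_, h⟩; exact h
    · intro h
      refine ⟨?_, h⟩
      by_contra hc
      exact h (hB n k (by omega))
  -- value invariance
  have valExt : ∀ n M, B n ≤ M →
      ∑ k ∈ Finset.range M, f n k * q ^ k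
        = ∑ k ∈ Finset.range (B n), f n k * q ^ k := by
    intro n M h
    symm
    apply Finset.sum_subset (Finset.range_subset_range.mpr h)
    intro x _ hnx
    simp only [Finset.mem_range, not_lt] at hnx
    rw [hB n x hnx, zero_mul]
  have hval : ∀ n, ∑ k ∈ Finset.range (B (n+1)), f (n+1) k * q ^ k
      = ∑ k ∈ Finset.range (B n), f n k * q ^ k := by
    intro n
    set M := max (max (B n) (B (n+1))) (jj n + 2) with hM
    have h1 : B n ≤ M := le_trans (le_max_left _ _) (le_max_left _ _)
    have h2 : B (n+1) ≤ M := le_trans (le_max_right _ _) (le_max_left _ _)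
    have h3 : jj n + 1 < M := lt_of_lt_of_le (by omega) (le_max_right _ _)
    rw [← valExt n M h1, ← valExt (n+1) M h2]
    exact Stmt8Aux.val_step (hU n) M h3
  have hvalc : ∀ n, ∑ k ∈ Finset.range (B n), f n k * q ^ k
      = ∑ k ∈ Finset.range (B 0), f 0 k * q ^ k := by
    intro n
    induction n with
    | zero => rfl
    | succ n IH => rw [hval n, IH]
  -- card monotonicity
  have cardStep : ∀ n, (Spt (n+1)).card ≤ (Spt n).card := by
    intro n
    obtain ⟨hs, hij, hsαi, hαine, hsβi, hβine, hmidf, hβtop, hothf, hjif⟩ :=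
      Stmt8Aux.ustep_facts hq (hU n) (hdig n)
    by_cases hji : jj n = ii n
    · apply Finset.card_le_card
      intro k hk
      rw [memSpt] at hk ⊢
      by_cases hki : k = ii n
      · rw [hki]; exact hαine
      · by_cases hki1 : k = ii n + 1
        · rw [hki1]
          have h5 := hjif hji
          intro h0; rw [h0, mul_zero] at h5; exact lt_irrefl 0 h5
        · rw [hothf k hki (by omega)] at hk; exact hk
    · have hijlt : ii n < jj n := lt_of_le_of_ne hij (Ne.symm hji)
      have hmem : ii n + 1 ∈ Spt n :=
        (memSpt _ _).mpr (hmidf (ii n + 1) (by omega) (by omega)).1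
      have hsub : Spt (n+1) ⊆ insert (jj n + 1) ((Spt n).erase (ii n + 1)) := by
        intro k hk
        rw [memSpt] at hk
        rw [Finset.mem_insert]
        by_cases hkj : k = jj n + 1
        · exact Or.inl hkj
        · right
          rw [Finset.mem_erase, memSpt]
          have hki1 : k ≠ ii n + 1 := by
            intro hc
            rw [hc] at hk
            exact hk (hmidf (ii n + 1) (by omega) (by omega)).2
          refine ⟨hki1, ?_⟩
          by_cases hki : k = ii n
          · rw [hki]; exact hαine
          · by_cases hmid : ii n < k ∧ k ≤ jj n
            · exact absurd (hmidf k hmid.1 hmid.2).2 hk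
            · rw [hothf k hki (by omega)] at hk; exact hk
      calc (Spt (n+1)).card
          ≤ (insert (jj n + 1) ((Spt n).erase (ii n + 1))).card :=
            Finset.card_le_card hsub
        _ ≤ ((Spt n).erase (ii n + 1)).card + 1 := Finset.card_insert_le _ _
        _ ≤ (Spt n).card := by
            rw [Finset.card_erase_of_mem hmem]
            have h6 : 1 ≤ (Spt n).card := Finset.card_pos.mpr ⟨_, hmem⟩
            omega
  have hcard : ∀ n, (Spt n).card ≤ (Spt 0).card := by
    intro n
    induction n with
    | zero => exact le_refl _
    | succ n IH => exact (cardStep n).trans IH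
  -- uniform support bound
  set V0 := ∑ k ∈ Finset.range (B 0), f 0 k * q ^ k with hV0
  set N0 := (Spt 0).card with hN0
  have hposbound : ∀ n p, p ∈ Spt n → (q:ℤ) ^ p ≤ |V0| * q ^ N0 := by
    intro n p hp
    have hp' := (memSpt n p).mp hp
    have hpb : p < B n := by
      have hp2 := hp
      simp only [hSpt, Finset.mem_filter, Finset.mem_range] at hp2
      exact hp2.1
    have h := Stmt8Aux.supp_bound q hq (f n) (B n) (hdig n) (hB n) p hpb hp'
    rw [hvalc n] at h
    have hcard2 : ((Finset.range (B n)).filter fun k => f n k ≠ 0 ∧ k < p).card ≤ N0 := by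
      have hsub2 : ((Finset.range (B n)).filter fun k => f n k ≠ 0 ∧ k < p) ⊆ Spt n := by
        simp only [hSpt]
        intro k hk
        simp only [Finset.mem_filter, Finset.mem_range] at hk ⊢
        exact ⟨hk.1, hk.2.1⟩
      exact (Finset.card_le_card hsub2).trans (hcard n)
    have hmono : (q:ℤ) ^ (((Finset.range (B n)).filter
        fun k => f n k ≠ 0 ∧ k < p).card) ≤ q ^ N0 :=
      pow_le_pow_right₀ (by linarith) hcard2
    calc (q:ℤ) ^ p ≤ _ := h
      _ ≤ |V0| * q ^ N0 := mul_le_mul_of_nonneg_left hmono (abs_nonneg _)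
  set C := (|V0| * q ^ N0).toNat with hC
  have hCspt : ∀ n p, p ∈ Spt n → p < C := by
    intro n p hp
    have h1 := hposbound n p hp
    have h2 : ((p:ℤ)) < 2 ^ p := by exact_mod_cast (Nat.lt_two_pow_self : p < 2 ^ p)
    have h3 : (2:ℤ) ^ p ≤ q ^ p := pow_le_pow_left₀ (by norm_num) hq p
    have h5 : ((C:ℤ)) = |V0| * q ^ N0 :=
      Int.toNat_of_nonneg (le_trans (le_of_lt (pow_pos hq0 p)) h1)
    have h6 : (p:ℤ) < (C:ℤ) := by rw [h5]; linarith
    exact_mod_cast h6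
  -- the key dichotomy
  have key : ∀ n, (∑ k ∈ Spt (n+1), 2 ^ (C - k)) + 1 ≤ (∑ k ∈ Spt n, 2 ^ (C - k))
      ∨ (Spt (n+1) = Spt n ∧
          Stmt8Aux.phiMeas (f (n+1)) (Spt (n+1)) + 1 ≤ Stmt8Aux.phiMeas (f n) (Spt n)) := by
    intro n
    obtain ⟨hs, hij, hsαi, hαine, hsβi, hβine, hmidf, hβtop, hothf, hjif⟩ :=
      Stmt8Aux.ustep_facts hq (hU n) (hdig n)
    by_cases hji : jj n = ii n
    · have hsub : Spt (n+1) ⊆ Spt n := by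
        intro k hk
        rw [memSpt] at hk ⊢
        by_cases hki : k = ii n
        · rw [hki]; exact hαine
        · by_cases hki1 : k = ii n + 1
          · rw [hki1]
            have h5 := hjif hji
            intro h0; rw [h0, mul_zero] at h5; exact lt_irrefl 0 h5
          · rw [hothf k hki (by omega)] at hk; exact hk
      by_cases hz : f (n+1) (ii n + 1) = 0
      · left
        have hmem : ii n + 1 ∈ Spt n := (memSpt _ _).mpr (by
          have h5 := hjif hji
          intro h0; rw [h0, mul_zero] at h5; exact lt_irrefl 0 h5)
        have hnot : ii n + 1 ∉ Spt (n+1) := by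
          rw [memSpt]; simpa using hz
        have h7 : ∑ k ∈ Spt (n+1), 2 ^ (C - k) < ∑ k ∈ Spt n, 2 ^ (C - k) :=
          Finset.sum_lt_sum_of_subset hsub hmem hnot
            (Nat.two_pow_pos _) (fun j _ _ => Nat.zero_le _)
        omega
      · right
        have hSeq : Spt (n+1) = Spt n := by
          apply Finset.Subset.antisymm hsub
          intro k hk
          rw [memSpt] at hk ⊢
          by_cases hki : k = ii n
          · rw [hki]; exact hβine
          · by_cases hki1 : k = ii n + 1
            · rw [hki1]; exact hz
            · rw [hothf k hki (by omega)]; exact hk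
        refine ⟨hSeq, ?_⟩
        rw [hSeq]
        have hβtop' : f (n+1) (ii n + 1) = f n (ii n + 1) + ss n := by
          rw [← hji]; exact hβtop
        have hsβi1 : ss n * f (n+1) (ii n + 1) < 0 := by
          have h1 := hjif hji
          have h2 : ss n * f (n + 1) (ii n + 1) = ss n * f n (ii n + 1) + 1 := by
            rw [hβtop']
            rcases hs with h | h <;> rw [h] <;> ring
          have h3 : ss n * f (n+1) (ii n + 1) ≠ 0 := by
            rcases hs with h | h <;> rw [h] <;> simpa using hz
          have h4 : ss n * f (n+1) (ii n + 1) ≤ 0 := by omega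
          exact lt_of_le_of_ne h4 h3
        exact Stmt8Aux.phi_dec hs (fun k => memSpt n k)
          hsαi (hjif hji) hsβi hsβi1
          (fun k hk hk1 => hothf k hk (by omega))
    · left
      have hijlt : ii n < jj n := lt_of_le_of_ne hij (Ne.symm hji)
      have hmem : ii n + 1 ∈ Spt n :=
        (memSpt _ _).mpr (hmidf (ii n + 1) (by omega) (by omega)).1
      have hjmem : jj n ∈ Spt n :=
        (memSpt _ _).mpr (hmidf (jj n) (by omega) (by omega)).1
      have hjC : jj n < C := hCspt n _ hjmem
      have hsub : Spt (n+1) ⊆ insert (jj n + 1) ((Spt n).erase (ii n + 1)) := by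
        intro k hk
        rw [memSpt] at hk
        rw [Finset.mem_insert]
        by_cases hkj : k = jj n + 1
        · exact Or.inl hkj
        · right
          rw [Finset.mem_erase, memSpt]
          have hki1 : k ≠ ii n + 1 := by
            intro hc
            rw [hc] at hk
            exact hk (hmidf (ii n + 1) (by omega) (by omega)).2
          refine ⟨hki1, ?_⟩
          by_cases hki : k = ii n
          · rw [hki]; exact hαine
          · by_cases hmid : ii n < k ∧ k ≤ jj n
            · exact absurd (hmidf k hmid.1 hmid.2).2 hk
            · rw [hothf k hki (by omega)] at hk; exact hk
      have h1 : ∑ k ∈ Spt (n+1), 2 ^ (C - k)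
          ≤ ∑ k ∈ insert (jj n + 1) ((Spt n).erase (ii n + 1)), 2 ^ (C - k) :=
        Finset.sum_le_sum_of_subset hsub
      have h2 : ∑ k ∈ insert (jj n + 1) ((Spt n).erase (ii n + 1)), 2 ^ (C - k)
          ≤ 2 ^ (C - (jj n + 1)) + ∑ k ∈ (Spt n).erase (ii n + 1), 2 ^ (C - k) := by
        by_cases hmem2 : jj n + 1 ∈ (Spt n).erase (ii n + 1)
        · rw [Finset.insert_eq_self.mpr hmem2]
          exact Nat.le_add_left _ _
        · rw [Finset.sum_insert hmem2]
      have h3 : ∑ k ∈ (Spt n).erase (ii n + 1), 2 ^ (C - k) + 2 ^ (C - (ii n + 1))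
          = ∑ k ∈ Spt n, 2 ^ (C - k) := Finset.sum_erase_add _ _ hmem
      have h4 : (2:ℕ) ^ (C - (jj n + 1)) < 2 ^ (C - (ii n + 1)) :=
        Nat.pow_lt_pow_right (by norm_num) (by omega)
      omega
  -- descent
  set K := C * C * C + 1 with hK
  have hphile : ∀ n, Stmt8Aux.phiMeas (f n) (Spt n) ≤ C * C * C := fun n =>
    Stmt8Aux.phi_le (f n) (Spt n) C (fun k hk => hCspt n k hk)
  have descent : ∀ n,
      K * (∑ k ∈ Spt (n+1), 2 ^ (C - k)) + Stmt8Aux.phiMeas (f (n+1)) (Spt (n+1)) + 1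
      ≤ K * (∑ k ∈ Spt n, 2 ^ (C - k)) + Stmt8Aux.phiMeas (f n) (Spt n) := by
    intro n
    rcases key n with h | ⟨hSeq, hphi⟩
    · have hb1 := hphile (n+1)
      have h1 : K * ((∑ k ∈ Spt (n+1), 2 ^ (C - k)) + 1)
          ≤ K * (∑ k ∈ Spt n, 2 ^ (C - k)) := Nat.mul_le_mul_left K h
      have h2 : K * ((∑ k ∈ Spt (n+1), 2 ^ (C - k)) + 1)
          = K * (∑ k ∈ Spt (n+1), 2 ^ (C - k)) + K := by ring
      omega
    · rw [hSeq] at hphi ⊢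
      omega
  have total : ∀ n,
      K * (∑ k ∈ Spt n, 2 ^ (C - k)) + Stmt8Aux.phiMeas (f n) (Spt n) + n
      ≤ K * (∑ k ∈ Spt 0, 2 ^ (C - k)) + Stmt8Aux.phiMeas (f 0) (Spt 0) := by
    intro n
    induction n with
    | zero => omega
    | succ n IH =>
      have := descent n
      omega
  have hfin := total (K * (∑ k ∈ Spt 0, 2 ^ (C - k)) + Stmt8Aux.phiMeas (f 0) (Spt 0) + 1)
  omega
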